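/- arXiv:1710.03026 — 10 statements merged into one kernel-verified Lean document; each statement's English description precedes it below -/
import Mathlib

section
/- Let (b_n) be the Baum–Sweet sequence over F_2. Then the Nth well-distribution measure satisfies W(b_n, N) ≥ ⌊(N+1)/4⌋ for all N ≥ 1. -/
/-- The `N`th well-distribution measure of a binary sequence:
`W(s,N) = max |∑_{j<t} (-1)^{s_{a+jb}}|` over `a ≥ 0`, `b,t ≥ 1` with `a+(t-1)b < N`. -/
noncomputable def Wmeasure (s : ℕ → ZMod 2) (N : ℕ) : ℤ :=
  sSup {x : ℤ | ∃ a b t : ℕ, 1 ≤ b ∧ 1 ≤ t ∧ a + (t - 1) * b < N ∧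
    x = |∑ j ∈ Finset.range t, (-1 : ℤ) ^ (s (a + j * b)).val|}

lemma Wmeasure_bdd (s : ℕ → ZMod 2) (N : ℕ) :
    BddAbove {x : ℤ | ∃ a b t : ℕ, 1 ≤ b ∧ 1 ≤ t ∧ a + (t - 1) * b < N ∧
      x = |∑ j ∈ Finset.range t, (-1 : ℤ) ^ (s (a + j * b)).val|} := by
  refine ⟨(N : ℤ), ?_⟩
  rintro x ⟨a, c, t, hc, ht, hlt, rfl⟩
  have h1 : |∑ j ∈ Finset.range t, (-1 : ℤ) ^ (s (a + j * c)).val| ≤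
      ∑ j ∈ Finset.range t, |(-1 : ℤ) ^ (s (a + j * c)).val| :=
    Finset.abs_sum_le_sum_abs _ _
  have h2 : ∀ j ∈ Finset.range t, |(-1 : ℤ) ^ (s (a + j * c)).val| = 1 := by
    intro j _
    rw [abs_pow, abs_neg, abs_one, one_pow]
  rw [Finset.sum_congr rfl h2, Finset.sum_const, Finset.card_range, nsmul_eq_mul,
    mul_one] at h1
  have htN : t ≤ N := by
    have h3 : t - 1 ≤ (t - 1) * c := Nat.le_mul_of_pos_right _ hc
    omega
  exact h1.trans (by exact_mod_cast htN)

/-- The Baum–Sweet sequence satisfies `W(b, N) ≥ ⌊(N+1)/4⌋` for all `N ≥ 1`. -/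
theorem baum_sweet_well_distribution (b : ℕ → ZMod 2) (hb0 : b 0 = 1)
    (heven : ∀ k m : ℕ, ¬ (4 ∣ m) → m % 2 = 0 → b (4 ^ k * m) = 0)
    (hodd : ∀ k m : ℕ, ¬ (4 ∣ m) → m % 2 = 1 → b (4 ^ k * m) = b ((m - 1) / 2)) :
    ∀ N : ℕ, 1 ≤ N → (((N + 1) / 4 : ℕ) : ℤ) ≤ Wmeasure b N := by
  intro N hN
  set T : ℕ := (N + 1) / 4 with hT
  rcases Nat.eq_zero_or_pos T with h0 | hTpos
  · -- T = 0 : it suffices that the measure is ≥ 0, indeed ≥ 1.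
    have hmem : (1 : ℤ) ∈ {x : ℤ | ∃ a c t : ℕ, 1 ≤ c ∧ 1 ≤ t ∧ a + (t - 1) * c < N ∧
        x = |∑ j ∈ Finset.range t, (-1 : ℤ) ^ (b (a + j * c)).val|} := by
      refine ⟨0, 1, 1, le_refl 1, le_refl 1, by omega, ?_⟩
      simp [hb0]
    have := le_csSup (Wmeasure_bdd b N) hmem
    rw [h0]
    exact le_trans (by norm_num) this
  · -- use the progression 2, 6, 10, … of length T
    have hzero : ∀ j : ℕ, b (2 + j * 4) = 0 := by
      intro j
      have h4 : ¬ (4 ∣ (2 + j * 4)) := by omega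
      have h2 : (2 + j * 4) % 2 = 0 := by omega
      have := heven 0 (2 + j * 4) h4 h2
      simpa using this
    have hmem : ((T : ℤ)) ∈ {x : ℤ | ∃ a c t : ℕ, 1 ≤ c ∧ 1 ≤ t ∧ a + (t - 1) * c < N ∧
        x = |∑ j ∈ Finset.range t, (-1 : ℤ) ^ (b (a + j * c)).val|} := by
      refine ⟨2, 4, T, by norm_num, hTpos, by omega, ?_⟩
      have : ∀ j ∈ Finset.range T, (-1 : ℤ) ^ (b (2 + j * 4)).val = 1 := by
        intro j _
        rw [hzero j]
        simp
      rw [Finset.sum_congr rfl this, Finset.sum_const, Finset.card_range, nsmul_eq_mul,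
        mul_one, abs_of_nonneg (by positivity)]
    exact le_csSup (Wmeasure_bdd b N) hmem
end

section
/- Let (s_n) be a sequence over F_2 with generating function G(x) = ∑_{n≥0} s_n x^n (a formal power series over F_2) satisfying f_2(G(x)^{2^ℓ}) + x·f_1(G(x)²) + G(x) + f_0(x) = 0, where f_0, f_1, f_2 are polynomials over F_2, deg f_0 ≤ 2^ℓ − 3 and ℓ ≥ 2. Then s_{2^ℓ n + 2^ℓ − 2} = 0 for all n ≥ 0. -/
open PowerSeries

/-- A power series supported on multiples of `d`. -/
def MySupp (d : ℕ) (φ : PowerSeries (ZMod 2)) : Prop :=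
  ∀ m : ℕ, ¬ d ∣ m → PowerSeries.coeff m φ = 0

lemma mySupp_one (d : ℕ) : MySupp d 1 := by
  intro m hm
  rw [PowerSeries.coeff_one]
  have : m ≠ 0 := by rintro rfl; exact hm (dvd_zero d)
  simp [this]

lemma mySupp_add {d : ℕ} {φ ψ : PowerSeries (ZMod 2)} (hφ : MySupp d φ)
    (hψ : MySupp d ψ) : MySupp d (φ + ψ) := by
  intro m hm
  simp [map_add, hφ m hm, hψ m hm]

lemma mySupp_mul {d : ℕ} {φ ψ : PowerSeries (ZMod 2)} (hφ : MySupp d φ)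
    (hψ : MySupp d ψ) : MySupp d (φ * ψ) := by
  intro m hm
  rw [PowerSeries.coeff_mul]
  apply Finset.sum_eq_zero
  rintro ⟨a, b⟩ hab
  rw [Finset.HasAntidiagonal.mem_antidiagonal] at hab
  by_cases ha : d ∣ a
  · by_cases hb : d ∣ b
    · exact absurd (hab ▸ dvd_add ha hb) hm
    · simp [hψ b hb]
  · simp [hφ a ha]

lemma mySupp_pow {d : ℕ} {φ : PowerSeries (ZMod 2)} (hφ : MySupp d φ) (n : ℕ) :
    MySupp d (φ ^ n) := by
  induction n with
  | zero => simpa using mySupp_one d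
  | succ k ih => rw [pow_succ]; exact mySupp_mul ih hφ

lemma mySupp_sq {d : ℕ} {φ : PowerSeries (ZMod 2)} (hφ : MySupp d φ) :
    MySupp (2 * d) (φ ^ 2) := by
  intro m hm
  rw [sq, PowerSeries.coeff_mul]
  apply Finset.sum_involution (fun p _ => (p.2, p.1))
  · rintro ⟨a, b⟩ _
    simp only
    rw [mul_comm]
    exact CharTwo.add_self_eq_zero _
  · rintro ⟨a, b⟩ hab hne hcontra
    have h1 : b = a := congrArg Prod.fst hcontra
    subst h1
    simp only at hne
    rw [Finset.HasAntidiagonal.mem_antidiagonal] at hab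
    have hab' : b + b = m := hab
    by_cases ha : d ∣ b
    · exact hm (by obtain ⟨k, hk⟩ := ha; exact ⟨k, by rw [← hab', hk]; ring⟩)
    · exact hne (by simp [hφ b ha])
  · rintro ⟨a, b⟩ hab
    rw [Finset.HasAntidiagonal.mem_antidiagonal] at hab ⊢
    omega
  · rintro ⟨a, b⟩ _; rfl

lemma mySupp_pow2 (s : ℕ → ZMod 2) (j : ℕ) :
    MySupp (2 ^ j) ((PowerSeries.mk s) ^ (2 ^ j)) := by
  induction j with
  | zero => intro m hm; exact absurd (one_dvd m) (by simp at hm)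
  | succ k ih =>
      have h2 : (PowerSeries.mk s) ^ (2 ^ (k + 1)) = ((PowerSeries.mk s) ^ (2 ^ k)) ^ 2 := by
        rw [← pow_mul]; ring_nf
      have h1 : (2 : ℕ) ^ (k + 1) = 2 * 2 ^ k := by ring
      rw [h2, h1]
      exact mySupp_sq ih

lemma mySupp_aeval {d : ℕ} {φ : PowerSeries (ZMod 2)} (hφ : MySupp d φ)
    (p : Polynomial (ZMod 2)) : MySupp d (Polynomial.aeval φ p) := by
  induction p using Polynomial.induction_on' with
  | add p q hp hq => rw [map_add]; exact mySupp_add hp hq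
  | monomial n a =>
      rw [Polynomial.aeval_monomial]
      apply mySupp_mul _ (mySupp_pow hφ n)
      intro m hm
      rw [PowerSeries.algebraMap_apply, PowerSeries.coeff_C]
      have : m ≠ 0 := by rintro rfl; exact hm (dvd_zero d)
      simp [this]

/-- If the generating function `G = ∑ s_n x^n ∈ F₂[[x]]` satisfies
`f₂(G^{2^ℓ}) + x·f₁(G²) + G + f₀(x) = 0` with `deg f₀ ≤ 2^ℓ - 3` and `ℓ ≥ 2`,
then `s (2^ℓ n + 2^ℓ - 2) = 0` for all `n`. -/
theorem coeff_vanishes_of_functional_equation (ℓ : ℕ) (hℓ : 2 ≤ ℓ) (s : ℕ → ZMod 2)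
    (f₀ f₁ f₂ : Polynomial (ZMod 2)) (hdeg : f₀.natDegree ≤ 2 ^ ℓ - 3)
    (heq : Polynomial.aeval ((PowerSeries.mk s) ^ (2 ^ ℓ)) f₂
      + PowerSeries.X * Polynomial.aeval ((PowerSeries.mk s) ^ 2) f₁
      + PowerSeries.mk s
      + Polynomial.aeval (PowerSeries.X : PowerSeries (ZMod 2)) f₀ = 0) :
    ∀ n : ℕ, s (2 ^ ℓ * n + (2 ^ ℓ - 2)) = 0 := by
  intro n
  have h4 : 4 ≤ 2 ^ ℓ := by
    calc (4 : ℕ) = 2 ^ 2 := by norm_num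
    _ ≤ 2 ^ ℓ := Nat.pow_le_pow_right (by norm_num) hℓ
  set m := 2 ^ ℓ * n + (2 ^ ℓ - 2) with hm
  -- first term
  have hA : PowerSeries.coeff m
      (Polynomial.aeval ((PowerSeries.mk s) ^ (2 ^ ℓ)) f₂) = 0 := by
    apply mySupp_aeval (mySupp_pow2 s ℓ)
    intro hdvd
    have h1 : (2 : ℕ) ^ ℓ ∣ 2 ^ ℓ * n := ⟨n, rfl⟩
    have h2 : (2 : ℕ) ^ ℓ ∣ 2 ^ ℓ - 2 := (Nat.dvd_add_right h1).mp hdvd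
    have := Nat.le_of_dvd (by omega) h2
    omega
  -- second term
  have hB : PowerSeries.coeff m
      (PowerSeries.X * Polynomial.aeval ((PowerSeries.mk s) ^ 2) f₁) = 0 := by
    have hsq : MySupp 2 ((PowerSeries.mk s) ^ 2) := by
      have := mySupp_sq (d := 1) (φ := PowerSeries.mk s) (fun m hm => absurd (one_dvd m) hm)
      simpa using this
    have hmpos : m = (m - 1) + 1 := by omega
    rw [hmpos, PowerSeries.coeff_succ_X_mul]
    apply mySupp_aeval hsq
    have heven : 2 ∣ m := by
      have : (2:ℕ) ∣ 2 ^ ℓ := dvd_pow_self 2 (by omega)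
      exact dvd_add (this.mul_right n) (by omega)
    omega
  -- fourth term
  have hF : PowerSeries.coeff m
      (Polynomial.aeval (PowerSeries.X : PowerSeries (ZMod 2)) f₀) = 0 := by
    have hco : (Polynomial.aeval (PowerSeries.X : PowerSeries (ZMod 2)) f₀)
        = (f₀ : PowerSeries (ZMod 2)) := by
      rw [Polynomial.aeval_def, ← Polynomial.eval₂_C_X_eq_coe]
      congr 1
    rw [hco, Polynomial.coeff_coe]
    apply Polynomial.coeff_eq_zero_of_natDegree_lt
    omega
  have := congrArg (PowerSeries.coeff m) heq
  simp only [map_add, hA, hB, hF, map_zero, zero_add, add_zero, PowerSeries.coeff_mk] at this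
  exact this
end

section
/- Let ℓ ≥ 2 and let (s_n) be a binary sequence whose generating function over F_2 satisfies f_2(G(x)^{2^ℓ}) + x·f_1(G(x)²) + G(x) + f_0(x) = 0 with polynomials f_0, f_1, f_2 over F_2 and deg f_0 ≤ 2^ℓ − 3. Then the well-distribution measure satisfies W(s_n, N) ≥ ⌊(N+1)/2^ℓ⌋. -/
lemma zmod2_sq : ∀ a : ZMod 2, a ^ 2 = a := by decide

lemma two_zero : (2 : PowerSeries (ZMod 2)) = 0 := by
  have : ((2:ℕ) : PowerSeries (ZMod 2)) = PowerSeries.C (R := ZMod 2) ((2:ℕ) : ZMod 2) :=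
    (map_natCast (PowerSeries.C (R := ZMod 2)) 2).symm
  norm_num at this
  rw [this, show ((2:ZMod 2)) = 0 by decide, map_zero]

lemma add_sq2 (x y : PowerSeries (ZMod 2)) : (x + y)^2 = x^2 + y^2 := by
  have h : x * y * (2:PowerSeries (ZMod 2)) = 0 := by rw [two_zero, mul_zero]
  ring_nf
  rw [h, zero_add, add_comm]

lemma aeval_sq (G : PowerSeries (ZMod 2)) (f : Polynomial (ZMod 2)) :
    Polynomial.aeval (G ^ 2) f = (Polynomial.aeval G f) ^ 2 := by
  induction f using Polynomial.induction_on with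
  | C a =>
      simp only [Polynomial.aeval_C]
      rw [← map_pow, zmod2_sq a]
  | add p q hp hq =>
      simp only [map_add, hp, hq, add_sq2]
  | monomial n a hn =>
      simp only [map_mul, Polynomial.aeval_C, map_pow, Polynomial.aeval_X] at *
      rw [mul_pow, ← pow_mul, ← pow_mul, mul_comm 2 (n+1),
        ← map_pow, zmod2_sq a]

lemma aeval_two_pow (G : PowerSeries (ZMod 2)) (f : Polynomial (ZMod 2)) (ℓ : ℕ) :
    Polynomial.aeval (G ^ 2 ^ ℓ) f = (Polynomial.aeval G f) ^ 2 ^ ℓ := by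
  induction ℓ with
  | zero => simp
  | succ k ih =>
      rw [pow_succ, pow_mul, aeval_sq, ih, ← pow_mul, ← pow_succ]

lemma coeff_sq_odd (φ : PowerSeries (ZMod 2)) {n : ℕ} (hn : Odd n) :
    PowerSeries.coeff (R := ZMod 2) n (φ ^ 2) = 0 := by
  rw [sq, PowerSeries.coeff_mul]
  refine Finset.sum_involution (fun p _ => p.swap) ?_ ?_ ?_ ?_
  · intro p hp
    rw [mul_comm]
    exact CharTwo.add_self_eq_zero _
  · intro p hp _ hps
    have h1 : p.1 = p.2 := congrArg Prod.snd hps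
    rw [Finset.HasAntidiagonal.mem_antidiagonal] at hp
    obtain ⟨c, hc⟩ := hn
    omega
  · intro p hp
    show p.swap ∈ _
    rw [Finset.HasAntidiagonal.mem_antidiagonal] at *
    simp only [Prod.fst_swap, Prod.snd_swap]
    omega
  · intro p hp; rfl

lemma coeff_sq_even (φ : PowerSeries (ZMod 2)) (m : ℕ) :
    PowerSeries.coeff (R := ZMod 2) (2 * m) (φ ^ 2) = (PowerSeries.coeff (R := ZMod 2) m φ) ^ 2 := by
  rw [sq, PowerSeries.coeff_mul]
  have hm : ((m, m) : ℕ × ℕ) ∈ Finset.HasAntidiagonal.antidiagonal (2 * m) := by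
    rw [Finset.HasAntidiagonal.mem_antidiagonal]; omega
  rw [← Finset.add_sum_erase _ _ hm]
  have key : ∑ p ∈ (Finset.HasAntidiagonal.antidiagonal (2 * m)).erase (m, m),
      PowerSeries.coeff (R := ZMod 2) p.1 φ * PowerSeries.coeff (R := ZMod 2) p.2 φ = 0 := by
    refine Finset.sum_involution (fun p _ => p.swap) ?_ ?_ ?_ ?_
    · intro p hp
      rw [mul_comm]
      exact CharTwo.add_self_eq_zero _
    · intro p hp _ hps
      have h1 : p.1 = p.2 := congrArg Prod.snd hps
      rw [Finset.mem_erase, Finset.HasAntidiagonal.mem_antidiagonal] at hp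
      exact hp.1 (by have : p.1 = m := by omega
                     exact Prod.ext this (h1 ▸ this))
    · intro p hp
      show p.swap ∈ _
      rw [Finset.mem_erase, Finset.HasAntidiagonal.mem_antidiagonal] at *
      refine ⟨fun h => hp.1 ?_, by simp; omega⟩
      have h1 := congrArg Prod.fst h
      have h2 := congrArg Prod.snd h
      simp at h1 h2
      exact Prod.ext h2 h1
    · intro p hp; rfl
  rw [key, add_zero, sq]

lemma coeff_two_pow (φ : PowerSeries (ZMod 2)) (ℓ n : ℕ) (h : ¬ 2 ^ ℓ ∣ n) :
    PowerSeries.coeff (R := ZMod 2) n (φ ^ 2 ^ ℓ) = 0 := by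
  induction ℓ generalizing φ n with
  | zero => exact absurd (one_dvd n) (by simpa using h)
  | succ k ih =>
      rw [pow_succ, pow_mul]
      rcases Nat.even_or_odd n with he | ho
      · obtain ⟨m, hm⟩ := he
        rw [show n = 2 * m from by omega, coeff_sq_even, ih _ m ?_, zero_pow two_ne_zero]
        rintro ⟨c, hc⟩
        exact h ⟨c, by rw [pow_succ, hm, hc]; ring⟩
      · exact coeff_sq_odd _ ho

/-- If `G = ∑ s_n x^n ∈ F₂[[x]]` satisfies `f₂(G^{2^ℓ}) + x·f₁(G²) + G + f₀(x) = 0`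
with `deg f₀ ≤ 2^ℓ - 3` and `ℓ ≥ 2`, then `W(s, N) ≥ ⌊(N+1)/2^ℓ⌋`. -/
theorem well_distribution_of_functional_equation (ℓ : ℕ) (hℓ : 2 ≤ ℓ) (s : ℕ → ZMod 2)
    (f₀ f₁ f₂ : Polynomial (ZMod 2)) (hdeg : f₀.natDegree ≤ 2 ^ ℓ - 3)
    (heq : Polynomial.aeval ((PowerSeries.mk s) ^ (2 ^ ℓ)) f₂
      + PowerSeries.X * Polynomial.aeval ((PowerSeries.mk s) ^ 2) f₁
      + PowerSeries.mk s
      + Polynomial.aeval (PowerSeries.X : PowerSeries (ZMod 2)) f₀ = 0) :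
    ∀ N : ℕ, (((N + 1) / 2 ^ ℓ : ℕ) : ℤ) ≤ Wmeasure s N := by
  have h4 : 4 ≤ 2 ^ ℓ := by
    calc (4:ℕ) = 2^2 := rfl
    _ ≤ 2^ℓ := Nat.pow_le_pow_right (by norm_num) hℓ
  -- Step 1: the sequence vanishes on the arithmetic progression `2^ℓ - 2 + j·2^ℓ`.
  have hvan : ∀ j : ℕ, s (2^ℓ - 2 + j * 2^ℓ) = 0 := by
    intro j
    set n := 2^ℓ - 2 + j * 2^ℓ with hn
    have hcoeff := congrArg (PowerSeries.coeff (R := ZMod 2) n) heq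
    rw [map_add, map_add, map_add, map_zero] at hcoeff
    have hA : PowerSeries.coeff (R := ZMod 2) n
        (Polynomial.aeval ((PowerSeries.mk s) ^ 2 ^ ℓ) f₂) = 0 := by
      rw [aeval_two_pow]
      apply coeff_two_pow
      intro hd
      have hmod : n % 2^ℓ = 2^ℓ - 2 := by
        rw [hn, Nat.add_mul_mod_self_right]
        exact Nat.mod_eq_of_lt (by omega)
      rw [Nat.dvd_iff_mod_eq_zero] at hd
      omega
    have h2n : 2 ∣ n := by
      have h1 : 2 ∣ 2^ℓ := dvd_pow_self 2 (by omega)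
      exact Nat.dvd_add (Nat.dvd_sub h1 (by norm_num)) (Dvd.dvd.mul_left h1 j)
    have hB : PowerSeries.coeff (R := ZMod 2) n
        (PowerSeries.X * Polynomial.aeval ((PowerSeries.mk s) ^ 2) f₁) = 0 := by
      rw [aeval_sq, show n = (n - 1) + 1 from by omega, PowerSeries.coeff_succ_X_mul]
      exact coeff_sq_odd _
        (Nat.Even.sub_odd (by omega) ((even_iff_exists_two_mul).mpr
          (by obtain ⟨c, hc⟩ := h2n; exact ⟨c, hc⟩)) odd_one)
    have hD : PowerSeries.coeff (R := ZMod 2) n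
        (Polynomial.aeval (PowerSeries.X : PowerSeries (ZMod 2)) f₀) = 0 := by
      rw [Polynomial.aeval_eq_sum_range, map_sum]
      apply Finset.sum_eq_zero
      intro i hi
      rw [Finset.mem_range] at hi
      rw [LinearMap.map_smul, PowerSeries.coeff_X_pow, if_neg (by omega), smul_zero]
    rw [hA, hB, hD, PowerSeries.coeff_mk] at hcoeff
    simpa using hcoeff
  intro N
  set t := (N + 1) / 2 ^ ℓ with ht
  set S := {x : ℤ | ∃ a b t : ℕ, 1 ≤ b ∧ 1 ≤ t ∧ a + (t - 1) * b < N ∧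
    x = |∑ j ∈ Finset.range t, (-1 : ℤ) ^ (s (a + j * b)).val|} with hS
  have hW : Wmeasure s N = sSup S := rfl
  by_cases hN : N = 0
  · subst hN
    have hset : S = ∅ := by
      ext x
      simp only [hS, Set.mem_setOf_eq, Set.mem_empty_iff_false, iff_false]
      rintro ⟨a, b, t', hb, ht', hlt, _⟩
      omega
    have ht0 : t = 0 := by rw [ht]; exact Nat.div_eq_of_lt (by omega)
    rw [hW, hset, Int.csSup_empty, ht0]
    simp
  · have hbdd : BddAbove S := by
      refine ⟨(N : ℤ), fun x hx => ?_⟩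
      obtain ⟨a, b, t', hb, ht', hlt, hxeq⟩ := hx
      have habs : |∑ j ∈ Finset.range t', (-1 : ℤ) ^ (s (a + j * b)).val| ≤ t' := by
        calc |∑ j ∈ Finset.range t', (-1 : ℤ) ^ (s (a + j * b)).val|
            ≤ ∑ j ∈ Finset.range t', |(-1 : ℤ) ^ (s (a + j * b)).val| :=
              Finset.abs_sum_le_sum_abs _ _
          _ = ∑ j ∈ Finset.range t', 1 := by
              apply Finset.sum_congr rfl
              intro j _
              rw [abs_pow, abs_neg, abs_one, one_pow]
          _ = t' := by simp
      have ht'N : t' ≤ N := by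
        have : t' - 1 ≤ (t' - 1) * b := Nat.le_mul_of_pos_right _ (by omega)
        omega
      rw [hxeq]
      exact le_trans habs (by exact_mod_cast ht'N)
    rcases Nat.eq_zero_or_pos t with h0 | hpos
    · rw [hW, h0]
      have hmem : |(-1 : ℤ) ^ (s 0).val| ∈ S := by
        refine ⟨0, 1, 1, le_refl 1, le_refl 1, by omega, by simp⟩
      exact le_trans (by positivity) (le_csSup hbdd hmem)
    · have htle : t * 2 ^ ℓ ≤ N + 1 := Nat.div_mul_le_self (N + 1) (2 ^ ℓ)
      have hge : 2 ^ ℓ ≤ t * 2 ^ ℓ := Nat.le_mul_of_pos_left _ hpos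
      have hsub : (t - 1) * 2 ^ ℓ = t * 2 ^ ℓ - 2 ^ ℓ := Nat.sub_one_mul t (2 ^ ℓ)
      have hmem : ((t : ℤ)) ∈ S := by
        refine ⟨2 ^ ℓ - 2, 2 ^ ℓ, t, by omega, hpos, by omega, ?_⟩
        have hsum : ∑ j ∈ Finset.range t, (-1 : ℤ) ^ (s (2 ^ ℓ - 2 + j * 2 ^ ℓ)).val
            = (t : ℤ) := by
          rw [Finset.sum_congr rfl (fun j _ => by rw [hvan j])]
          simp
        rw [hsum, abs_of_nonneg (by positivity)]
      rw [hW]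
      exact le_csSup hbdd hmem
end

section
/- Let ℓ ≥ 1 and let (s_n) be a sequence over F_2 whose generating function G(x) satisfies f_1(x², G(x)²) + (x^{2^ℓ} + 1)·G(x) + f_0(x) = 0 with polynomials f_1 ∈ F_2[x,y], f_0 ∈ F_2[x], deg f_0 ≤ 2^ℓ − 2. Then s_{2^ℓ − 1} = 0 and s_{2^ℓ(n+1) + 2^ℓ − 1} = s_{2^ℓ n + 2^ℓ − 1} for all n ≥ 0; in particular s_{2^ℓ n + 2^ℓ − 1} = 0 for all n ≥ 0. -/
lemma coeff_sq_odd_s6 (H : PowerSeries (ZMod 2)) (N : ℕ) (hN : Odd N) :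
    PowerSeries.coeff N (H ^ 2) = 0 := by
  rw [sq, PowerSeries.coeff_mul]
  refine Finset.sum_involution (fun p _ => (p.2, p.1)) ?_ ?_ ?_ ?_
  · intro p _
    have : (PowerSeries.coeff p.1) H * (PowerSeries.coeff p.2) H
        = (PowerSeries.coeff p.2) H * (PowerSeries.coeff p.1) H :=
      mul_comm _ _
    rw [this]
    exact CharTwo.add_self_eq_zero _
  · intro p hmem _ h
    have h1 : p.2 = p.1 := congrArg Prod.fst h
    rcases Finset.HasAntidiagonal.mem_antidiagonal.mp hmem with h2
    rw [h1] at h2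
    exact (Nat.not_even_iff_odd.mpr hN) ⟨p.1, by omega⟩
  · intro p hp
    rw [Finset.HasAntidiagonal.mem_antidiagonal] at hp
    show (p.2, p.1) ∈ Finset.HasAntidiagonal.antidiagonal N
    rw [Finset.HasAntidiagonal.mem_antidiagonal]
    omega
  · intro p _; rfl

lemma aeval_sq_s6 (v : Fin 2 → PowerSeries (ZMod 2)) (f : MvPolynomial (Fin 2) (ZMod 2)) :
    MvPolynomial.aeval (fun i => (v i) ^ 2) f = (MvPolynomial.aeval v f) ^ 2 := by
  induction f using MvPolynomial.induction_on with
  | C a =>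
    simp only [MvPolynomial.aeval_C]
    haveI : Fact (Nat.Prime 2) := ⟨by norm_num⟩
    have : a ^ 2 = a := ZMod.pow_card a
    calc algebraMap (ZMod 2) (PowerSeries (ZMod 2)) a
        = algebraMap (ZMod 2) (PowerSeries (ZMod 2)) (a ^ 2) := by rw [this]
      _ = (algebraMap (ZMod 2) (PowerSeries (ZMod 2)) a) ^ 2 := by rw [map_pow]
  | add p q hp hq =>
    haveI : CharP (PowerSeries (ZMod 2)) 2 :=
      charP_of_injective_ringHom (PowerSeries.C_injective) 2
    rw [map_add, map_add, hp, hq, CharTwo.add_sq]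
  | mul_X p i hp =>
    rw [map_mul, map_mul, hp, MvPolynomial.aeval_X, MvPolynomial.aeval_X]
    ring

/-- If `G = ∑ s_n x^n ∈ F₂[[x]]` satisfies `f₁(x², G²) + (x^{2^ℓ}+1)G + f₀(x) = 0`
with `deg f₀ ≤ 2^ℓ - 2` and `ℓ ≥ 1`, then `s (2^ℓ - 1) = 0`, the subsequence
`s (2^ℓ n + 2^ℓ - 1)` is constant in `n`, and in particular it vanishes. -/
theorem coeff_vanishes_of_functional_equation' (ℓ : ℕ) (hℓ : 1 ≤ ℓ) (s : ℕ → ZMod 2)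
    (f₁ : MvPolynomial (Fin 2) (ZMod 2)) (f₀ : Polynomial (ZMod 2))
    (hdeg : f₀.natDegree ≤ 2 ^ ℓ - 2)
    (heq : MvPolynomial.aeval
        ![(PowerSeries.X : PowerSeries (ZMod 2)) ^ 2, (PowerSeries.mk s) ^ 2] f₁
      + ((PowerSeries.X : PowerSeries (ZMod 2)) ^ (2 ^ ℓ) + 1) * PowerSeries.mk s
      + Polynomial.aeval (PowerSeries.X : PowerSeries (ZMod 2)) f₀ = 0) :
    s (2 ^ ℓ - 1) = 0 ∧
    (∀ n : ℕ, s (2 ^ ℓ * (n + 1) + (2 ^ ℓ - 1)) = s (2 ^ ℓ * n + (2 ^ ℓ - 1))) ∧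
    (∀ n : ℕ, s (2 ^ ℓ * n + (2 ^ ℓ - 1)) = 0) := by
  have hpow : 2 ≤ 2 ^ ℓ := by
    calc 2 = 2 ^ 1 := (pow_one 2).symm
    _ ≤ 2 ^ ℓ := Nat.pow_le_pow_right (by norm_num) hℓ
  -- rewrite the first summand as a square
  have hvec : ![(PowerSeries.X : PowerSeries (ZMod 2)) ^ 2, (PowerSeries.mk s) ^ 2]
      = fun i => (![(PowerSeries.X : PowerSeries (ZMod 2)), PowerSeries.mk s] i) ^ 2 := by
    funext i
    fin_cases i <;> simp
  rw [hvec, aeval_sq_s6] at heq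
  set H := MvPolynomial.aeval ![(PowerSeries.X : PowerSeries (ZMod 2)), PowerSeries.mk s] f₁
  -- key relation at odd index N
  have key : ∀ N : ℕ, Odd N → 2 ^ ℓ - 2 < N →
      (if 2 ^ ℓ ≤ N then s (N - 2 ^ ℓ) else 0) + s N = 0 := by
    intro N hodd hNbig
    have hc := congrArg (PowerSeries.coeff N) heq
    rw [map_add, map_add, map_zero] at hc
    rw [coeff_sq_odd_s6 _ _ hodd, zero_add] at hc
    -- middle term
    have hmid : PowerSeries.coeff N
        (((PowerSeries.X : PowerSeries (ZMod 2)) ^ (2 ^ ℓ) + 1) * PowerSeries.mk s)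
        = (if 2 ^ ℓ ≤ N then s (N - 2 ^ ℓ) else 0) + s N := by
      rw [add_mul, one_mul, map_add, PowerSeries.coeff_X_pow_mul']
      simp [PowerSeries.coeff_mk]
    -- polynomial term
    have hpoly : PowerSeries.coeff N
        (Polynomial.aeval (PowerSeries.X : PowerSeries (ZMod 2)) f₀) = 0 := by
      rw [Polynomial.aeval_eq_sum_range, map_sum]
      refine Finset.sum_eq_zero fun i hi => ?_
      rw [Finset.mem_range] at hi
      have hiN : i ≠ N := by omega
      rw [map_smul, PowerSeries.coeff_X_pow, if_neg (Ne.symm hiN), smul_zero]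
    rw [hmid, hpoly, add_zero] at hc
    exact hc
  have hodd' : ∀ n : ℕ, Odd (2 ^ ℓ * n + (2 ^ ℓ - 1)) := by
    intro n
    have h2 : 2 ∣ 2 ^ ℓ := dvd_pow_self 2 (by omega)
    rcases h2 with ⟨k, hk⟩
    have hmul : 2 ^ ℓ * n = 2 * (k * n) := by rw [hk]; ring
    refine ⟨k * n + (k - 1), by omega⟩
  have h0 : s (2 ^ ℓ - 1) = 0 := by
    have := key (2 ^ ℓ - 1) (by simpa using hodd' 0) (by omega)
    rw [if_neg (by omega)] at this
    rw [zero_add] at this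
    exact this
  have hstep : ∀ n : ℕ, s (2 ^ ℓ * (n + 1) + (2 ^ ℓ - 1)) = s (2 ^ ℓ * n + (2 ^ ℓ - 1)) := by
    intro n
    have h1 : 2 ^ ℓ ≤ 2 ^ ℓ * (n + 1) := Nat.le_mul_of_pos_right _ (by omega)
    have := key (2 ^ ℓ * (n + 1) + (2 ^ ℓ - 1)) (hodd' (n + 1)) (by omega)
    rw [if_pos (by omega)] at this
    have harg : 2 ^ ℓ * (n + 1) + (2 ^ ℓ - 1) - 2 ^ ℓ = 2 ^ ℓ * n + (2 ^ ℓ - 1) := by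
      have : 2 ^ ℓ * (n + 1) = 2 ^ ℓ * n + 2 ^ ℓ := by ring
      omega
    rw [harg] at this
    have h2 := eq_neg_of_add_eq_zero_left this
    rw [CharTwo.neg_eq] at h2
    exact h2.symm
  refine ⟨h0, hstep, ?_⟩
  intro n
  induction n with
  | zero => simpa using h0
  | succ n ih => rw [hstep n]; exact ih
end

section
/- Let (s_n) be a sequence over F_2 with generating function G(x) satisfying (x+1)^{2^ℓ}((a_1 x + a_0)G(x)² + G(x)) + f(x) = 0, where ℓ ≥ 0, deg f ≤ 2^ℓ − 1, and (a_1, a_0) ≠ (0,0). Then for every k ≥ 0 and every n ≥ 0: s_{2n} + s_{2n + 2^{k+ℓ}} = a_0 (s_n + s_{n + 2^{k+ℓ−1}}) and s_{2n+1} + s_{2n + 2^{k+ℓ} + 1} = a_1 (s_n + s_{n + 2^{k+ℓ−1}}) (identities in F_2), where for k+ℓ ≥ 1 the index 2^{k+ℓ−1} is the usual power, obtained by comparing coefficients of (x+1)^{2^{k+ℓ}−2^ℓ}·[the functional equation] at x^{2n+2^{k+ℓ}} and x^{2n+2^{k+ℓ}+1}. -/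
private lemma zmod2_mul_self : ∀ a : ZMod 2, a * a = a := by decide

/-- Coefficients of the square of a power series over `F₂`. -/
private lemma coeff_mk_sq (s : ℕ → ZMod 2) (m : ℕ) :
    (PowerSeries.coeff m) ((PowerSeries.mk s) ^ 2) =
      if Even m then s (m / 2) else 0 := by
  have hswap : ∀ a b : ZMod 2, a * b + b * a = 0 := by decide
  rw [sq, PowerSeries.coeff_mul]
  simp only [PowerSeries.coeff_mk]
  by_cases hm : Even m
  · obtain ⟨t, ht⟩ := hm
    have h2 : m / 2 = t := by omega
    have hmem : (t, t) ∈ Finset.HasAntidiagonal.antidiagonal m := by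
      rw [Finset.HasAntidiagonal.mem_antidiagonal]; omega
    rw [← Finset.add_sum_erase _ _ hmem]
    have hrest : ∑ p ∈ (Finset.HasAntidiagonal.antidiagonal m).erase (t, t), s p.1 * s p.2 = 0 := by
      refine Finset.sum_involution (fun p _ => (p.2, p.1)) (fun p _ => hswap _ _)
        (fun p hp hf => ?_) (fun p hp => ?_) (fun p hp => rfl)
      · obtain ⟨i, j⟩ := p
        simp only [Finset.mem_erase, Finset.HasAntidiagonal.mem_antidiagonal, Prod.mk.injEq, ne_eq] at hp
        intro hcontra
        simp only [Prod.mk.injEq] at hcontra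
        exact hp.1 ⟨by omega, by omega⟩
      · obtain ⟨i, j⟩ := p
        simp only [Finset.mem_erase, Finset.HasAntidiagonal.mem_antidiagonal, Prod.mk.injEq, ne_eq] at hp ⊢
        omega
    rw [hrest, add_zero, if_pos ⟨t, ht⟩, h2, zmod2_mul_self]
  · rw [if_neg hm]
    refine Finset.sum_involution (fun p _ => (p.2, p.1)) (fun p _ => hswap _ _)
      (fun p hp hf => ?_) (fun p hp => ?_) (fun p hp => rfl)
    · obtain ⟨i, j⟩ := p
      rw [Finset.HasAntidiagonal.mem_antidiagonal] at hp
      intro hcontra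
      simp only [Prod.mk.injEq] at hcontra
      exact hm ⟨i, by omega⟩
    · obtain ⟨i, j⟩ := p
      simp only [Finset.HasAntidiagonal.mem_antidiagonal] at hp ⊢
      omega

/-- If `G = ∑ s_n x^n ∈ F₂[[x]]` satisfies
`(x+1)^{2^ℓ}((a₁x+a₀)G² + G) + f(x) = 0` with `deg f ≤ 2^ℓ - 1` and
`(a₁,a₀) ≠ (0,0)`, then for all `k, n` with `k + ℓ ≥ 1` we have the
`F₂`-identities `s_{2n} + s_{2n+2^{k+ℓ}} = a₀(s_n + s_{n+2^{k+ℓ-1}})` and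
`s_{2n+1} + s_{2n+2^{k+ℓ}+1} = a₁(s_n + s_{n+2^{k+ℓ-1}})`. -/
theorem correlation_identities_of_functional_equation (ℓ : ℕ) (s : ℕ → ZMod 2)
    (a₀ a₁ : ZMod 2) (ha : ¬(a₁ = 0 ∧ a₀ = 0)) (f : Polynomial (ZMod 2))
    (hdeg : f.natDegree ≤ 2 ^ ℓ - 1)
    (heq : ((PowerSeries.X : PowerSeries (ZMod 2)) + 1) ^ (2 ^ ℓ) *
        ((PowerSeries.C a₁ * PowerSeries.X + PowerSeries.C a₀) *
          (PowerSeries.mk s) ^ 2 + PowerSeries.mk s)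
      + Polynomial.aeval (PowerSeries.X : PowerSeries (ZMod 2)) f = 0) :
    ∀ k n : ℕ, 1 ≤ k + ℓ →
      s (2 * n) + s (2 * n + 2 ^ (k + ℓ)) = a₀ * (s n + s (n + 2 ^ (k + ℓ - 1))) ∧
      s (2 * n + 1) + s (2 * n + 2 ^ (k + ℓ) + 1) = a₁ * (s n + s (n + 2 ^ (k + ℓ - 1))) := by
  intro k n hk
  haveI hCharP : CharP (PowerSeries (ZMod 2)) 2 :=
    charP_of_injective_ringHom PowerSeries.C_injective 2
  set H : PowerSeries (ZMod 2) :=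
    (PowerSeries.C a₁ * PowerSeries.X + PowerSeries.C a₀) *
      (PowerSeries.mk s) ^ 2 + PowerSeries.mk s with hHdef
  -- aeval X f is the coercion of f
  have halg : (algebraMap (ZMod 2) (PowerSeries (ZMod 2))) = PowerSeries.C := by
    ext r
    simp [PowerSeries.algebraMap_apply]
  have hcoe : Polynomial.aeval (PowerSeries.X : PowerSeries (ZMod 2)) f
      = (f : PowerSeries (ZMod 2)) := by
    rw [Polynomial.aeval_def, halg, Polynomial.eval₂_C_X_eq_coe]
  have hle : (2:ℕ) ^ ℓ ≤ 2 ^ (k + ℓ) := Nat.pow_le_pow_right (by norm_num) (Nat.le_add_left _ _)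
  have hpos : (1:ℕ) ≤ 2 ^ ℓ := Nat.one_le_two_pow
  -- the multiplied equation
  set q : Polynomial (ZMod 2) := (Polynomial.X + 1) ^ (2 ^ (k + ℓ) - 2 ^ ℓ) * f with hqdef
  have h2 : ((PowerSeries.X : PowerSeries (ZMod 2)) + 1) ^ (2 ^ (k + ℓ)) * H
      + (q : PowerSeries (ZMod 2)) = 0 := by
    have e1 : ((PowerSeries.X : PowerSeries (ZMod 2)) + 1) ^ (2 ^ (k + ℓ))
        = (PowerSeries.X + 1) ^ (2 ^ (k + ℓ) - 2 ^ ℓ) * (PowerSeries.X + 1) ^ (2 ^ ℓ) := by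
      rw [← pow_add]
      congr 1
      omega
    have e2 : (q : PowerSeries (ZMod 2))
        = ((PowerSeries.X : PowerSeries (ZMod 2)) + 1) ^ (2 ^ (k + ℓ) - 2 ^ ℓ)
          * (f : PowerSeries (ZMod 2)) := by
      rw [hqdef]
      push_cast
      rfl
    rw [e1, e2, mul_assoc, ← mul_add, ← hcoe, heq, mul_zero]
  -- coefficients of q vanish from 2^(k+ℓ) on
  have hcoeffq : ∀ N : ℕ, 2 ^ (k + ℓ) ≤ N →
      (PowerSeries.coeff N) (q : PowerSeries (ZMod 2)) = 0 := by
    intro N hN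
    rw [Polynomial.coeff_coe]
    apply Polynomial.coeff_eq_zero_of_natDegree_lt
    have hXadd : (Polynomial.X + 1 : Polynomial (ZMod 2)).natDegree ≤ 1 :=
      le_trans (Polynomial.natDegree_add_le _ _) (by simp)
    have hpow : ((Polynomial.X + 1 : Polynomial (ZMod 2)) ^ (2 ^ (k + ℓ) - 2 ^ ℓ)).natDegree
        ≤ 2 ^ (k + ℓ) - 2 ^ ℓ := by
      refine le_trans (Polynomial.natDegree_pow_le) ?_
      calc (2 ^ (k + ℓ) - 2 ^ ℓ) * (Polynomial.X + 1 : Polynomial (ZMod 2)).natDegree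
          ≤ (2 ^ (k + ℓ) - 2 ^ ℓ) * 1 := Nat.mul_le_mul_left _ hXadd
        _ = 2 ^ (k + ℓ) - 2 ^ ℓ := mul_one _
    have hq : q.natDegree ≤ (2 ^ (k + ℓ) - 2 ^ ℓ) + (2 ^ ℓ - 1) :=
      le_trans (Polynomial.natDegree_mul_le) (add_le_add hpow hdeg)
    omega
  -- Frobenius: (X+1)^(2^(k+ℓ)) = X^(2^(k+ℓ)) + 1
  have hfrob : ((PowerSeries.X : PowerSeries (ZMod 2)) + 1) ^ (2 ^ (k + ℓ))
      = PowerSeries.X ^ (2 ^ (k + ℓ)) + 1 := by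
    rw [add_pow_char_pow, one_pow]
  -- key coefficient relation
  have key : ∀ j : ℕ, (PowerSeries.coeff j) H
      + (PowerSeries.coeff (j + 2 ^ (k + ℓ))) H = 0 := by
    intro j
    have hc := congrArg (PowerSeries.coeff (j + 2 ^ (k + ℓ))) h2
    rw [hfrob, add_mul, one_mul, map_add, map_add, map_zero,
      PowerSeries.coeff_X_pow_mul, hcoeffq _ (Nat.le_add_left _ _), add_zero] at hc
    exact hc
  -- coefficient formula for H
  have hHcoeff : ∀ j : ℕ, (PowerSeries.coeff j) H
      = (if Even j then a₀ * s (j / 2) else a₁ * s (j / 2)) + s j := by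
    intro j
    rw [hHdef, map_add, PowerSeries.coeff_mk, add_mul, map_add, mul_assoc,
      PowerSeries.coeff_C_mul, PowerSeries.coeff_C_mul, coeff_mk_sq]
    congr 1
    rcases Nat.even_or_odd j with hj | hj
    · rw [if_pos hj, if_pos hj]
      rcases Nat.eq_zero_or_pos j with rfl | hjpos
      · rw [PowerSeries.coeff_zero_X_mul, mul_zero, zero_add]
      · obtain ⟨j', rfl⟩ : ∃ j', j = j' + 1 := ⟨j - 1, by omega⟩
        rw [PowerSeries.coeff_succ_X_mul, coeff_mk_sq]
        have hodd : ¬ Even j' := by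
          rcases hj with ⟨t, ht⟩
          rintro ⟨u, hu⟩
          omega
        rw [if_neg hodd, mul_zero, zero_add]
    · obtain ⟨u, hu⟩ := hj
      subst hu
      have hne : ¬ Even (2 * u + 1) := by
        rintro ⟨t, ht⟩
        omega
      rw [if_neg hne, if_neg hne, PowerSeries.coeff_succ_X_mul, coeff_mk_sq,
        if_pos ⟨u, by ring⟩, mul_zero, add_zero]
      congr 2
      omega
  -- arithmetic setup
  have hE : 2 ^ (k + ℓ) = 2 * 2 ^ (k + ℓ - 1) := by
    rw [← pow_succ']
    congr 1
    omega
  have harith : ∀ x y u v c : ZMod 2, (c * x + u) + (c * y + v) = 0 → u + v = c * (x + y) := by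
    decide
  constructor
  · have h := key (2 * n)
    rw [hHcoeff, hHcoeff] at h
    have he1 : Even (2 * n) := ⟨n, by ring⟩
    have he2 : Even (2 * n + 2 ^ (k + ℓ)) := ⟨n + 2 ^ (k + ℓ - 1), by omega⟩
    rw [if_pos he1, if_pos he2] at h
    have hd1 : 2 * n / 2 = n := by omega
    have hd2 : (2 * n + 2 ^ (k + ℓ)) / 2 = n + 2 ^ (k + ℓ - 1) := by omega
    rw [hd1, hd2] at h
    exact harith _ _ _ _ _ h
  · have h := key (2 * n + 1)
    rw [hHcoeff, hHcoeff] at h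
    have he1 : ¬ Even (2 * n + 1) := by
      rintro ⟨t, ht⟩; omega
    have he2 : ¬ Even (2 * n + 1 + 2 ^ (k + ℓ)) := by
      rintro ⟨t, ht⟩; omega
    rw [if_neg he1, if_neg he2] at h
    have hd1 : (2 * n + 1) / 2 = n := by omega
    have hd2 : (2 * n + 1 + 2 ^ (k + ℓ)) / 2 = n + 2 ^ (k + ℓ - 1) := by omega
    rw [hd1, hd2] at h
    have hidx : 2 * n + 1 + 2 ^ (k + ℓ) = 2 * n + 2 ^ (k + ℓ) + 1 := by omega
    rw [hidx] at h
    exact harith _ _ _ _ _ h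
end

section
/- Let 1 ≤ a < 2^ℓ and let (r_n) be the binary pattern sequence defined by r_0 = 0 and r_n = r_{⌊n/2⌋} + 1 if n ≡ a (mod 2^ℓ), r_n = r_{⌊n/2⌋} otherwise (addition in F_2). Then C_2(r_n, N) > N/(2^ℓ + 2) − 2 for all N ≥ 2^{ℓ+1} + 4. -/
/-- The `N`th correlation measure of order 2 of a binary sequence. -/
noncomputable def C2 (s : ℕ → ZMod 2) (N : ℕ) : ℤ :=
  sSup {x : ℤ | ∃ M d₁ d₂ : ℕ, d₁ < d₂ ∧ d₂ + M < N ∧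
    x = |∑ n ∈ Finset.range M, (-1 : ℤ) ^ ((s (n + d₁)).val + (s (n + d₂)).val)|}

/-- For the pattern sequence `r 0 = 0`, `r n = r (n/2) + 1` if `n ≡ a (mod 2^ℓ)`
and `r n = r (n/2)` otherwise (with `1 ≤ a < 2^ℓ`), we have
`C₂(r,N) > N/(2^ℓ+2) - 2` for `N ≥ 2^{ℓ+1}+4`. -/
theorem pattern_sequence_correlation (ℓ a : ℕ) (ha1 : 1 ≤ a) (ha2 : a < 2 ^ ℓ)
    (r : ℕ → ZMod 2) (hr0 : r 0 = 0)
    (hr : ∀ n : ℕ, 1 ≤ n → r n = r (n / 2) + (if n % 2 ^ ℓ = a then 1 else 0)) :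
    ∀ N : ℕ, 2 ^ (ℓ + 1) + 4 ≤ N →
      (N : ℚ) / (2 ^ ℓ + 2) - 2 < (C2 r N : ℚ) := by
  have hℓ : 1 ≤ ℓ := by
    rcases Nat.eq_zero_or_pos ℓ with h | h
    · subst h; simp at ha2; omega
    · exact h
  have hr' : ∀ n : ℕ, r n = r (n / 2) + (if n % 2 ^ ℓ = a then 1 else 0) := by
    intro n
    rcases Nat.eq_zero_or_pos n with h | h
    · subst h
      rw [if_neg (by simp; omega)]
      simp [hr0]
    · exact hr n h
  have hpow : 2 ^ (ℓ - 1) * 2 = 2 ^ ℓ := by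
    rw [← pow_succ]; congr 1; omega
  have key : ∀ K n, n < 2 ^ K →
      r (n + 2 ^ (ℓ - 1) * 2 ^ K) = r n + r (2 ^ (ℓ - 1) * 2 ^ K) := by
    intro K
    induction K with
    | zero =>
      intro n hn
      interval_cases n
      simp [hr0]
    | succ K ih =>
      intro n hn
      have hX : 2 ^ (ℓ - 1) * 2 ^ (K + 1) = 2 ^ (ℓ - 1) * 2 ^ K * 2 := by ring
      have hXl : 2 ^ (ℓ - 1) * 2 ^ (K + 1) = 2 ^ ℓ * 2 ^ K := by
        rw [← hpow]; ring
      have hc : r (2 ^ (ℓ - 1) * 2 ^ (K + 1)) = r (2 ^ (ℓ - 1) * 2 ^ K) := by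
        rw [hr' (2 ^ (ℓ - 1) * 2 ^ (K + 1))]
        have h1 : 2 ^ (ℓ - 1) * 2 ^ (K + 1) / 2 = 2 ^ (ℓ - 1) * 2 ^ K := by
          rw [hX]; exact Nat.mul_div_cancel _ two_pos
        have h2 : 2 ^ (ℓ - 1) * 2 ^ (K + 1) % 2 ^ ℓ = 0 := by
          rw [hXl]; exact Nat.mul_mod_right _ _
        rw [h1, h2, if_neg (by omega)]
        ring
      have hmod : (n + 2 ^ (ℓ - 1) * 2 ^ (K + 1)) % 2 ^ ℓ = n % 2 ^ ℓ := by
        rw [hXl]; exact Nat.add_mul_mod_self_left n (2 ^ ℓ) (2 ^ K)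
      have hdiv : (n + 2 ^ (ℓ - 1) * 2 ^ (K + 1)) / 2 = n / 2 + 2 ^ (ℓ - 1) * 2 ^ K := by
        rw [hX]; exact Nat.add_mul_div_right n _ two_pos
      have hn2 : n / 2 < 2 ^ K := by
        rw [pow_succ] at hn; omega
      have hih := ih (n / 2) hn2
      rw [hr' (n + 2 ^ (ℓ - 1) * 2 ^ (K + 1)), hdiv, hmod, hih, hc, hr' n]
      ring
  intro N hN
  have hp4 : 2 ^ (ℓ + 1) = 2 ^ (ℓ - 1) * 4 := by
    rw [show ℓ + 1 = (ℓ - 1) + 2 by omega, pow_add]; norm_num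
  have hB0 : 0 < 2 ^ (ℓ - 1) + 1 := by positivity
  have hNB : 2 ^ (ℓ - 1) + 1 ≤ N - 1 := by omega
  have hx0 : (N - 1) / (2 ^ (ℓ - 1) + 1) ≠ 0 := by
    have := (Nat.one_le_div_iff hB0).mpr hNB
    omega
  set K := Nat.log 2 ((N - 1) / (2 ^ (ℓ - 1) + 1)) with hK
  have h1 : 2 ^ K ≤ (N - 1) / (2 ^ (ℓ - 1) + 1) := Nat.pow_log_le_self 2 hx0
  have h2 : (N - 1) / (2 ^ (ℓ - 1) + 1) < 2 ^ (K + 1) :=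
    Nat.lt_pow_succ_log_self one_lt_two _
  have hMB : 2 ^ K * (2 ^ (ℓ - 1) + 1) < N := by
    have ha : 2 ^ K * (2 ^ (ℓ - 1) + 1) ≤ ((N - 1) / (2 ^ (ℓ - 1) + 1)) * (2 ^ (ℓ - 1) + 1) :=
      Nat.mul_le_mul_right _ h1
    have hb : ((N - 1) / (2 ^ (ℓ - 1) + 1)) * (2 ^ (ℓ - 1) + 1) ≤ N - 1 :=
      Nat.div_mul_le_self _ _
    omega
  have hN2 : N ≤ 2 ^ K * (2 ^ ℓ + 2) := by
    have := (Nat.div_lt_iff_lt_mul hB0).mp h2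
    have hKK : 2 ^ (K + 1) * (2 ^ (ℓ - 1) + 1) = 2 ^ K * (2 ^ (ℓ - 1) * 2 + 2) := by ring
    rw [hKK, hpow] at this
    omega
  -- the witness configuration
  have hterm : ∀ x y : ZMod 2, (-1 : ℤ) ^ (x.val + (x + y).val) = (-1 : ℤ) ^ y.val := by decide
  have hsum : (∑ n ∈ Finset.range (2 ^ K),
      (-1 : ℤ) ^ ((r (n + 0)).val + (r (n + 2 ^ (ℓ - 1) * 2 ^ K)).val))
      = (2 ^ K : ℕ) * (-1 : ℤ) ^ (r (2 ^ (ℓ - 1) * 2 ^ K)).val := by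
    have hcongr : ∀ n ∈ Finset.range (2 ^ K),
        (-1 : ℤ) ^ ((r (n + 0)).val + (r (n + 2 ^ (ℓ - 1) * 2 ^ K)).val)
          = (-1 : ℤ) ^ (r (2 ^ (ℓ - 1) * 2 ^ K)).val := by
      intro n hn
      rw [Nat.add_zero, key K n (Finset.mem_range.mp hn)]
      exact hterm (r n) (r (2 ^ (ℓ - 1) * 2 ^ K))
    rw [Finset.sum_congr rfl hcongr, Finset.sum_const, Finset.card_range, nsmul_eq_mul]
  have habs : |∑ n ∈ Finset.range (2 ^ K),
      (-1 : ℤ) ^ ((r (n + 0)).val + (r (n + 2 ^ (ℓ - 1) * 2 ^ K)).val)| = (2 ^ K : ℤ) := by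
    rw [hsum, abs_mul, abs_pow]
    simp
  have hmem : ((2 ^ K : ℕ) : ℤ) ∈ {x : ℤ | ∃ M d₁ d₂ : ℕ, d₁ < d₂ ∧ d₂ + M < N ∧
      x = |∑ n ∈ Finset.range M, (-1 : ℤ) ^ ((r (n + d₁)).val + (r (n + d₂)).val)|} := by
    refine ⟨2 ^ K, 0, 2 ^ (ℓ - 1) * 2 ^ K, by positivity, ?_, ?_⟩
    · have : 2 ^ (ℓ - 1) * 2 ^ K + 2 ^ K = 2 ^ K * (2 ^ (ℓ - 1) + 1) := by ring
      omega
    · rw [habs]; push_cast; ring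
  have hbdd : BddAbove {x : ℤ | ∃ M d₁ d₂ : ℕ, d₁ < d₂ ∧ d₂ + M < N ∧
      x = |∑ n ∈ Finset.range M, (-1 : ℤ) ^ ((r (n + d₁)).val + (r (n + d₂)).val)|} := by
    refine ⟨(N : ℤ), fun x hx => ?_⟩
    obtain ⟨M', d₁, d₂, h12, hlt, hxeq⟩ := hx
    rw [hxeq]
    calc |∑ n ∈ Finset.range M', (-1 : ℤ) ^ ((r (n + d₁)).val + (r (n + d₂)).val)|
        ≤ ∑ n ∈ Finset.range M', |(-1 : ℤ) ^ ((r (n + d₁)).val + (r (n + d₂)).val)| :=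
          Finset.abs_sum_le_sum_abs _ _
      _ = ∑ n ∈ Finset.range M', 1 := by
          refine Finset.sum_congr rfl fun n _ => ?_
          rw [abs_pow]; simp
      _ = (M' : ℤ) := by simp
      _ ≤ (N : ℤ) := by exact_mod_cast (by omega : M' ≤ N)
  have hC2 : ((2 ^ K : ℕ) : ℤ) ≤ C2 r N := le_csSup hbdd hmem
  have hC2Q : ((2 ^ K : ℕ) : ℚ) ≤ (C2 r N : ℚ) := by exact_mod_cast hC2
  have hQpos : (0 : ℚ) < (2 : ℚ) ^ ℓ + 2 := by positivity
  have hdiv : (N : ℚ) / ((2 : ℚ) ^ ℓ + 2) ≤ ((2 ^ K : ℕ) : ℚ) := by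
    rw [div_le_iff₀ hQpos]
    have : (N : ℚ) ≤ ((2 ^ K * (2 ^ ℓ + 2) : ℕ) : ℚ) := by exact_mod_cast hN2
    push_cast at this ⊢
    linarith
  linarith
end

section
/- Let (t_n) be the Thue–Morse sequence over F_2 (t_0 = 0, t_{2n} = t_n, t_{2n+1} = t_n + 1). Then C_2(t_n, N) > N/4 − 2 for all N ≥ 8. -/
def tmF (t : ℕ → ZMod 2) (n : ℕ) : ℤ := (-1 : ℤ) ^ ((t n).val + (t (n + 1)).val)

def tmS (t : ℕ → ZMod 2) (M : ℕ) : ℤ := ∑ n ∈ Finset.range M, tmF t n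

lemma tmS_succ (t : ℕ → ZMod 2) (M : ℕ) : tmS t (M + 1) = tmS t M + tmF t M :=
  Finset.sum_range_succ _ _

lemma zmod2_aux1 : ∀ a : ZMod 2, a.val + (a + 1).val = 1 := by decide

lemma zmod2_aux2 : ∀ a b : ZMod 2,
    (-1 : ℤ) ^ ((a + 1).val + b.val) = -(-1 : ℤ) ^ (a.val + b.val) := by decide

section

variable (t : ℕ → ZMod 2) (hte : ∀ n : ℕ, t (2 * n) = t n)
  (hto : ∀ n : ℕ, t (2 * n + 1) = t n + 1)

include hte hto

lemma tmF_even (k : ℕ) : tmF t (2 * k) = -1 := by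
  unfold tmF
  rw [show 2 * k + 1 = 2 * k + 1 from rfl, hto, hte, zmod2_aux1]
  ring

lemma tmF_odd (k : ℕ) : tmF t (2 * k + 1) = -tmF t k := by
  unfold tmF
  rw [show 2 * k + 1 + 1 = 2 * (k + 1) from by ring, hto, hte, zmod2_aux2]

lemma tmS_even (K : ℕ) : tmS t (2 * K) = -K - tmS t K := by
  induction K with
  | zero => simp [tmS]
  | succ K ih =>
    rw [show 2 * (K + 1) = (2 * K + 1) + 1 from by ring, tmS_succ, tmS_succ,
      ih, tmF_even t hte hto, tmF_odd t hte hto, tmS_succ]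
    push_cast
    ring

lemma tmS_odd (K : ℕ) : tmS t (2 * K + 1) = -K - tmS t K - 1 := by
  rw [tmS_succ, tmS_even t hte hto, tmF_even t hte hto]
  ring

end

lemma tmS_abs_le (t : ℕ → ZMod 2) (M : ℕ) : |tmS t M| ≤ M := by
  calc |tmS t M| ≤ ∑ n ∈ Finset.range M, |tmF t n| := Finset.abs_sum_le_sum_abs _ _
    _ = M := by
        rw [Finset.sum_congr rfl (fun n _ => by
          unfold tmF; rw [abs_pow, abs_neg, abs_one, one_pow])]
        simp

lemma tmS_nonpos (t : ℕ → ZMod 2) (hte : ∀ n : ℕ, t (2 * n) = t n)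
    (hto : ∀ n : ℕ, t (2 * n + 1) = t n + 1) (M : ℕ) : tmS t M ≤ 0 := by
  rcases Nat.even_or_odd M with ⟨K, hK⟩ | ⟨K, hK⟩
  · subst hK
    rw [show K + K = 2 * K from by ring, tmS_even t hte hto]
    have := tmS_abs_le t K
    have := neg_abs_le (tmS t K)
    push_cast at *
    linarith
  · subst hK
    rw [tmS_odd t hte hto]
    have := tmS_abs_le t K
    have := neg_abs_le (tmS t K)
    linarith

/-- The Thue–Morse sequence satisfies `C₂(t,N) > N/4 - 2` for `N ≥ 8`. -/
theorem thue_morse_correlation (t : ℕ → ZMod 2) (ht0 : t 0 = 0)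
    (hte : ∀ n : ℕ, t (2 * n) = t n) (hto : ∀ n : ℕ, t (2 * n + 1) = t n + 1) :
    ∀ N : ℕ, 8 ≤ N → (N : ℚ) / 4 - 2 < (C2 t N : ℚ) := by
  intro N hN
  set A : Set ℤ := {x : ℤ | ∃ M d₁ d₂ : ℕ, d₁ < d₂ ∧ d₂ + M < N ∧
    x = |∑ n ∈ Finset.range M, (-1 : ℤ) ^ ((t (n + d₁)).val + (t (n + d₂)).val)|} with hA
  have hbdd : BddAbove A := by
    refine ⟨N, fun x hx => ?_⟩
    obtain ⟨M, d₁, d₂, hd, hdM, hx⟩ := hx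
    have h1 : |∑ n ∈ Finset.range M, (-1 : ℤ) ^ ((t (n + d₁)).val + (t (n + d₂)).val)|
        ≤ M := by
      calc _ ≤ ∑ n ∈ Finset.range M,
            |(-1 : ℤ) ^ ((t (n + d₁)).val + (t (n + d₂)).val)| :=
          Finset.abs_sum_le_sum_abs _ _
        _ = M := by
            rw [Finset.sum_congr rfl (fun n _ => by rw [abs_pow, abs_neg, abs_one, one_pow])]
            simp
    rw [hx]
    exact h1.trans (by exact_mod_cast le_of_lt (lt_of_le_of_lt (Nat.le_add_left M d₂) hdM))
  have hmem : ∀ M : ℕ, M + 1 < N → |tmS t M| ∈ A := by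
    intro M hM
    refine ⟨M, 0, 1, by norm_num, by omega, ?_⟩
    unfold tmS tmF
    simp
  have key : ∀ M : ℕ, M + 1 < N → |tmS t M| ≤ C2 t N := by
    intro M hM
    have := le_csSup hbdd (hmem M hM)
    rw [C2, ← hA]
    exact this
  set K : ℕ := (N - 2) / 2 with hKdef
  have hK1 : 2 * K + 2 ≤ N := by omega
  have hK2 : N ≤ 2 * K + 3 := by omega
  by_cases hc : (N : ℚ) / 4 - 2 < (-(tmS t K) : ℚ)
  · have h := key K (by omega)
    have habs : |tmS t K| = -(tmS t K) := abs_of_nonpos (tmS_nonpos t hte hto K)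
    rw [habs] at h
    have h' : ((-(tmS t K) : ℤ) : ℚ) ≤ (C2 t N : ℚ) := by exact_mod_cast h
    push_cast at h'
    linarith
  · push_neg at hc
    have h := key (2 * K) (by omega)
    have hSe := tmS_even t hte hto K
    have hle : -(K : ℤ) ≤ tmS t K := by
      have := neg_abs_le (tmS t K)
      have := tmS_abs_le t K
      linarith
    have habs : |tmS t (2 * K)| = (K : ℤ) + tmS t K := by
      rw [hSe, abs_of_nonpos (by linarith [tmS_nonpos t hte hto K])]
      ring
    rw [habs] at h
    have h' : (((K : ℤ) + tmS t K : ℤ) : ℚ) ≤ (C2 t N : ℚ) := by exact_mod_cast h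
    have hKQ : (N : ℚ) ≤ 2 * (K : ℚ) + 3 := by exact_mod_cast hK2
    push_cast at h'
    linarith
end

section
/- Let (v_n) be the regular paperfolding sequence over F_2: if n = m·2^k with m odd then v_n = 1 if m ≡ 1 (mod 4) and v_n = 0 if m ≡ 3 (mod 4), and v_0 arbitrary. Then C_2(v_n, N) > N/6 − 2 for all N ≥ 12. -/
/-- Closed form for the helper sum. -/
lemma gsum (M : ℕ) :
    (∑ n ∈ Finset.range M, (if n % 4 = 3 then (-1 : ℤ) else 1)) = (M : ℤ) - 2 * (M / 4 : ℕ) := by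
  induction M with
  | zero => simp
  | succ M ih =>
    rw [Finset.sum_range_succ, ih]
    by_cases h : M % 4 = 3 <;> simp [h] <;> omega

/-- The regular paperfolding sequence (`v (m·2^k) = 1` if `m ≡ 1 (mod 4)`,
`v (m·2^k) = 0` if `m ≡ 3 (mod 4)`, for odd `m`; `v 0` arbitrary) satisfies
`C₂(v,N) > N/6 - 2` for `N ≥ 12`. -/
theorem paperfolding_correlation (v : ℕ → ZMod 2)
    (hv1 : ∀ m k : ℕ, m % 4 = 1 → v (m * 2 ^ k) = 1)
    (hv3 : ∀ m k : ℕ, m % 4 = 3 → v (m * 2 ^ k) = 0) :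
    ∀ N : ℕ, 12 ≤ N → (N : ℚ) / 6 - 2 < (C2 v N : ℚ) := by
  intro N hN
  have hv1' : ∀ m, m % 4 = 1 → v m = 1 := fun m h => by simpa using hv1 m 0 h
  have hv3' : ∀ m, m % 4 = 3 → v m = 0 := fun m h => by simpa using hv3 m 0 h
  have hv1'' : ∀ m, m % 4 = 1 → v (2 * m) = 1 := fun m h => by
    have := hv1 m 1 h; rwa [pow_one, mul_comm] at this
  have hv3'' : ∀ m, m % 4 = 3 → v (2 * m) = 0 := fun m h => by
    have := hv3 m 1 h; rwa [pow_one, mul_comm] at this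
  -- key pointwise fact
  have key : ∀ n : ℕ, n % 4 ≠ 3 → v (n + 1) = v (n + 9) := by
    intro n hn
    rcases (by omega : n % 4 = 0 ∨ n % 4 = 1 ∨ n % 4 = 2) with h | h | h
    · rw [hv1' _ (by omega), hv1' _ (by omega)]
    · obtain ⟨t, rfl⟩ : ∃ t, n = 4 * t + 1 := ⟨n / 4, by omega⟩
      have e1 : 4 * t + 1 + 1 = 2 * (2 * t + 1) := by ring
      have e2 : 4 * t + 1 + 9 = 2 * (2 * t + 5) := by ring
      rw [e1, e2]
      rcases (by omega : t % 2 = 0 ∨ t % 2 = 1) with h2 | h2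
      · rw [hv1'' _ (by omega), hv1'' _ (by omega)]
      · rw [hv3'' _ (by omega), hv3'' _ (by omega)]
    · rw [hv3' _ (by omega), hv3' _ (by omega)]
  set M : ℕ := N - 10 with hM
  set S : ℤ := ∑ n ∈ Finset.range M, (-1 : ℤ) ^ ((v (n + 1)).val + (v (n + 9)).val) with hS
  -- lower bound on S
  have hterm : ∀ n : ℕ, (if n % 4 = 3 then (-1 : ℤ) else 1) ≤
      (-1 : ℤ) ^ ((v (n + 1)).val + (v (n + 9)).val) := by
    intro n
    by_cases h : n % 4 = 3
    · simp only [h, if_pos]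
      rcases Nat.even_or_odd ((v (n + 1)).val + (v (n + 9)).val) with he | he
      · rw [he.neg_one_pow]; norm_num
      · rw [he.neg_one_pow]
    · simp only [h, if_neg, if_false]
      rw [key n h]
      have : Even ((v (n + 9)).val + (v (n + 9)).val) := ⟨(v (n + 9)).val, rfl⟩
      rw [this.neg_one_pow]
  have hSlb : (M : ℤ) - 2 * (M / 4 : ℕ) ≤ S := by
    rw [← gsum M, hS]
    exact Finset.sum_le_sum fun n _ => hterm n
  -- membership of |S|
  have hmem : |S| ∈ {x : ℤ | ∃ M d₁ d₂ : ℕ, d₁ < d₂ ∧ d₂ + M < N ∧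
      x = |∑ n ∈ Finset.range M, (-1 : ℤ) ^ ((v (n + d₁)).val + (v (n + d₂)).val)|} :=
    ⟨M, 1, 9, by omega, by omega, rfl⟩
  -- boundedness
  have hbdd : BddAbove {x : ℤ | ∃ M d₁ d₂ : ℕ, d₁ < d₂ ∧ d₂ + M < N ∧
      x = |∑ n ∈ Finset.range M, (-1 : ℤ) ^ ((v (n + d₁)).val + (v (n + d₂)).val)|} := by
    refine ⟨(N : ℤ), ?_⟩
    rintro x ⟨M', d₁, d₂, h1, h2, rfl⟩
    calc |∑ n ∈ Finset.range M', (-1 : ℤ) ^ ((v (n + d₁)).val + (v (n + d₂)).val)|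
        ≤ ∑ n ∈ Finset.range M', |(-1 : ℤ) ^ ((v (n + d₁)).val + (v (n + d₂)).val)| :=
          Finset.abs_sum_le_sum_abs _ _
      _ = ∑ n ∈ Finset.range M', 1 := by
          refine Finset.sum_congr rfl fun n _ => ?_
          rw [abs_pow, abs_neg, abs_one, one_pow]
      _ = (M' : ℤ) := by simp
      _ ≤ (N : ℤ) := by exact_mod_cast (by omega : M' ≤ N)
  have hC2 : (M : ℤ) - 2 * (M / 4 : ℕ) ≤ C2 v N :=
    le_trans (le_trans hSlb (le_abs_self S)) (le_csSup hbdd hmem)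
  -- finish numerically
  have hq : ((M : ℚ) - 2 * (M / 4 : ℕ)) ≤ (C2 v N : ℚ) := by exact_mod_cast hC2
  have hdiv' : (4 : ℚ) * ((M / 4 : ℕ) : ℚ) ≤ (M : ℚ) := by exact_mod_cast Nat.mul_div_le M 4
  have hMN : (M : ℚ) = (N : ℚ) - 10 := by
    rw [hM]; push_cast [Nat.cast_sub (by omega : 10 ≤ N)]; ring
  rw [hMN] at hq hdiv'
  linarith
end

section
/- Let (w_n) be the binary sequence defined by w_{2n} = 1 and w_{2n+1} = w_n + 1 (in F_2) for all n ≥ 0. Then C_2(w_n, N) > N/3 − 2 for all N ≥ 6. -/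
lemma aux_sum_bound (w : ℕ → ZMod 2)
    (hwe : ∀ n : ℕ, w (2 * n) = 1) (hwo : ∀ n : ℕ, w (2 * n + 1) = w n + 1) (M : ℕ) :
    ((M : ℤ) - 2 * ((M / 4 : ℕ) : ℤ)) ≤
      ∑ n ∈ Finset.range M, (-1 : ℤ) ^ ((w (n + 0)).val + (w (n + 4)).val) := by
  have hw4 : ∀ m, w (4 * m) = 1 := fun m => by
    rw [show 4 * m = 2 * (2 * m) by ring]; exact hwe _
  have hw41 : ∀ m, w (4 * m + 1) = 0 := fun m => by
    rw [show 4 * m + 1 = 2 * (2 * m) + 1 by ring, hwo, hwe]; decide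
  have hw42 : ∀ m, w (4 * m + 2) = 1 := fun m => by
    rw [show 4 * m + 2 = 2 * (2 * m + 1) by ring]; exact hwe _
  induction M with
  | zero => simp
  | succ M ih =>
    rw [Finset.sum_range_succ]
    have hterm : (if M % 4 = 3 then (-1 : ℤ) else 1) ≤
        (-1 : ℤ) ^ ((w (M + 0)).val + (w (M + 4)).val) := by
      by_cases h : M % 4 = 3
      · simp only [h, if_pos]
        rcases Nat.even_or_odd ((w (M + 0)).val + (w (M + 4)).val) with h1 | h1
        · rw [h1.neg_one_pow]; norm_num
        · rw [h1.neg_one_pow]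
      · simp only [h, if_neg, Nat.add_zero]
        have h012 : M % 4 = 0 ∨ M % 4 = 1 ∨ M % 4 = 2 := by omega
        rcases h012 with h0 | h1 | h2
        · obtain ⟨m, rfl⟩ : ∃ m, M = 4 * m := ⟨M / 4, by omega⟩
          rw [show 4 * m + 4 = 4 * (m + 1) by ring, hw4, hw4]
          decide
        · obtain ⟨m, rfl⟩ : ∃ m, M = 4 * m + 1 := ⟨M / 4, by omega⟩
          rw [show 4 * m + 1 + 4 = 4 * (m + 1) + 1 by ring, hw41, hw41]
          decide
        · obtain ⟨m, rfl⟩ : ∃ m, M = 4 * m + 2 := ⟨M / 4, by omega⟩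
          rw [show 4 * m + 2 + 4 = 4 * (m + 1) + 2 by ring, hw42, hw42]
          decide
    have hdiv : ((M + 1 : ℕ) : ℤ) - 2 * (((M + 1) / 4 : ℕ) : ℤ) ≤
        ((M : ℤ) - 2 * ((M / 4 : ℕ) : ℤ)) + (if M % 4 = 3 then (-1 : ℤ) else 1) := by
      by_cases h : M % 4 = 3 <;> simp only [h, if_pos, if_neg] <;> push_cast <;> omega
    calc ((M + 1 : ℕ) : ℤ) - 2 * (((M + 1) / 4 : ℕ) : ℤ)
        ≤ ((M : ℤ) - 2 * ((M / 4 : ℕ) : ℤ)) + (if M % 4 = 3 then (-1 : ℤ) else 1) := hdiv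
      _ ≤ _ := add_le_add ih hterm

/-- The sequence with `w (2n) = 1` and `w (2n+1) = w n + 1` (the unique sequence
with perfect linear complexity profile and perfect lattice profile) satisfies
`C₂(w,N) > N/3 - 2` for `N ≥ 6`. -/
theorem perfect_profile_sequence_correlation (w : ℕ → ZMod 2)
    (hwe : ∀ n : ℕ, w (2 * n) = 1) (hwo : ∀ n : ℕ, w (2 * n + 1) = w n + 1) :
    ∀ N : ℕ, 6 ≤ N → (N : ℚ) / 3 - 2 < (C2 w N : ℚ) := by
  intro N hN
  set M : ℕ := N - 5 with hM
  have hN5 : N = M + 5 := by omega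
  set x : ℤ := |∑ n ∈ Finset.range M, (-1 : ℤ) ^ ((w (n + 0)).val + (w (n + 4)).val)| with hx
  have hbdd : BddAbove {x : ℤ | ∃ M d₁ d₂ : ℕ, d₁ < d₂ ∧ d₂ + M < N ∧
      x = |∑ n ∈ Finset.range M, (-1 : ℤ) ^ ((w (n + d₁)).val + (w (n + d₂)).val)|} := by
    refine ⟨(N : ℤ), fun y hy => ?_⟩
    obtain ⟨M', d₁, d₂, h1, h2, rfl⟩ := hy
    calc |∑ n ∈ Finset.range M', (-1 : ℤ) ^ ((w (n + d₁)).val + (w (n + d₂)).val)|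
        ≤ ∑ n ∈ Finset.range M', |(-1 : ℤ) ^ ((w (n + d₁)).val + (w (n + d₂)).val)| :=
          Finset.abs_sum_le_sum_abs _ _
      _ = ∑ n ∈ Finset.range M', 1 := by
          refine Finset.sum_congr rfl fun n _ => ?_
          rw [abs_pow, abs_neg, abs_one, one_pow]
      _ = (M' : ℤ) := by simp
      _ ≤ (N : ℤ) := by exact_mod_cast Nat.le_of_lt (by omega)
  have hmem : x ∈ {x : ℤ | ∃ M d₁ d₂ : ℕ, d₁ < d₂ ∧ d₂ + M < N ∧
      x = |∑ n ∈ Finset.range M, (-1 : ℤ) ^ ((w (n + d₁)).val + (w (n + d₂)).val)|} :=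
    ⟨M, 0, 4, by norm_num, by omega, rfl⟩
  have hle : x ≤ C2 w N := le_csSup hbdd hmem
  have hxlb : ((M : ℤ) - 2 * ((M / 4 : ℕ) : ℤ)) ≤ x :=
    le_trans (aux_sum_bound w hwe hwo M) (le_abs_self _)
  have hC2 : ((M : ℤ) - 2 * ((M / 4 : ℕ) : ℤ)) ≤ C2 w N := le_trans hxlb hle
  have hq : ((M : ℚ) - 2 * ((M / 4 : ℕ) : ℚ)) ≤ (C2 w N : ℚ) := by exact_mod_cast hC2
  have hk : 4 * (M / 4) ≤ M := Nat.mul_div_le M 4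
  have hkq : (4 : ℚ) * ((M / 4 : ℕ) : ℚ) ≤ (M : ℚ) := by exact_mod_cast hk
  have hMq : (N : ℚ) = (M : ℚ) + 5 := by exact_mod_cast congrArg (Nat.cast : ℕ → ℚ) hN5
  have hM0 : (0 : ℚ) ≤ (M : ℚ) := Nat.cast_nonneg M
  rw [hMq]
  linarith
end

section
/- Let k ≥ 2 and let (s_n) be a binary k-automatic sequence generated by a finite automaton with state set Q (reading the k-ary digits of n most significant digit first, with δ(q_0, 0) = q_0). Then C_2(s_n, N) ≥ N/(k(|Q|+1)) for all N ≥ k(|Q|+1). -/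
lemma replicate_zero_foldl {Q : Type} (δ : Q → ℕ → Q) (q₀ : Q) (hδ : δ q₀ 0 = q₀) :
    ∀ t : ℕ, (List.replicate t 0).foldl δ q₀ = q₀ := by
  intro t
  induction t with
  | zero => simp
  | succ t ih => simp [List.replicate_succ, hδ, ih]

lemma digits_len_le_of_lt_pow {k n L : ℕ} (hk : 1 < k) (hn : n < k ^ L) :
    (Nat.digits k n).length ≤ L := by
  rcases Nat.eq_zero_or_pos n with rfl | hn0
  · simp
  · rw [Nat.digits_len k n hk hn0.ne']
    have := (Nat.log_lt_iff_lt_pow hk hn0.ne').mpr hn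
    omega

lemma state_add_mul_pow {Q : Type} {k : ℕ} (hk : 1 < k) (δ : Q → ℕ → Q) (q₀ : Q)
    (hδ : δ q₀ 0 = q₀) (L u n : ℕ) (hn : n < k ^ L) :
    ((Nat.digits k (n + u * k ^ L)).reverse).foldl δ q₀ =
      ((Nat.digits k n).reverse).foldl δ
        ((List.replicate (L - (Nat.digits k n).length) 0).foldl δ
          (((Nat.digits k u).reverse).foldl δ q₀)) := by
  have hlen : (Nat.digits k n).length ≤ L := digits_len_le_of_lt_pow hk hn
  rcases Nat.eq_zero_or_pos u with rfl | hu
  · simp [replicate_zero_foldl δ q₀ hδ]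
  · have h1 : (Nat.digits k n).length + (L - (Nat.digits k n).length) = L := by omega
    have h2 := Nat.digits_append_zeroes_append_digits
      (b := k) (k := L - (Nat.digits k n).length) (m := u) (n := n) hk hu
    rw [h1] at h2
    rw [show n + u * k ^ L = n + k ^ L * u by ring, ← h2]
    simp [List.foldl_append, List.reverse_append, List.reverse_replicate]

/-- A binary `k`-automatic sequence generated by an automaton with state set `Q`
(reading `k`-ary digits most significant first, with `δ q₀ 0 = q₀`) satisfies
`C₂(s,N) ≥ N/(k(|Q|+1))` for `N ≥ k(|Q|+1)`. -/
theorem automatic_sequence_correlation (k : ℕ) (hk : 2 ≤ k)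
    (Q : Type) [Fintype Q] (δ : Q → ℕ → Q) (q₀ : Q) (τ : Q → ZMod 2)
    (hδ : δ q₀ 0 = q₀) (s : ℕ → ZMod 2)
    (hs : ∀ n : ℕ, s n = τ (((Nat.digits k n).reverse).foldl δ q₀)) :
    ∀ N : ℕ, k * (Fintype.card Q + 1) ≤ N →
      (N : ℚ) / (k * (Fintype.card Q + 1)) ≤ (C2 s N : ℚ) := by
  intro N hN
  classical
  set c := Fintype.card Q + 1 with hc
  have hc0 : 0 < c := Nat.succ_pos _
  have hk1 : 1 < k := hk
  -- choose the largest L with c * k ^ L < N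
  set L := Nat.findGreatest (fun t => c * k ^ t < N) N with hL
  have hP0 : c * k ^ 0 < N := by
    have h1 : c * 1 < c * k := mul_lt_mul_of_pos_left hk1 hc0
    have h2 : c * k ≤ N := by rw [mul_comm]; exact hN
    simpa using lt_of_lt_of_le h1 h2
  have hPL : c * k ^ L < N :=
    Nat.findGreatest_spec (P := fun t => c * k ^ t < N) (Nat.zero_le N) hP0
  have hPsucc : N ≤ c * k ^ (L + 1) := by
    by_contra h
    push_neg at h
    have ha : L + 1 < k ^ (L + 1) := Nat.lt_pow_self (n := L + 1) hk1
    have hb : k ^ (L + 1) ≤ c * k ^ (L + 1) := Nat.le_mul_of_pos_left _ hc0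
    have hle : L + 1 ≤ N := by omega
    exact Nat.findGreatest_is_greatest (P := fun t => c * k ^ t < N)
      (Nat.lt_succ_self L) hle h
  -- pigeonhole: two residues with equal state
  obtain ⟨a, b, hab, hst⟩ := Fintype.exists_ne_map_eq_of_card_lt
    (fun i : Fin c => ((Nat.digits k (i : ℕ)).reverse).foldl δ q₀)
    (by simp [hc])
  -- WLOG u < v
  obtain ⟨u, v, huv, hvc, hstuv⟩ :
      ∃ u v : ℕ, u < v ∧ v < c ∧
        ((Nat.digits k u).reverse).foldl δ q₀ = ((Nat.digits k v).reverse).foldl δ q₀ := by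
    rcases lt_or_gt_of_ne hab with h | h
    · exact ⟨a, b, h, b.isLt, hst⟩
    · exact ⟨b, a, h, a.isLt, hst.symm⟩
  -- sequence agreement
  have hagree : ∀ n : ℕ, n < k ^ L → s (n + u * k ^ L) = s (n + v * k ^ L) := by
    intro n hn
    rw [hs, hs, state_add_mul_pow hk1 δ q₀ hδ L u n hn,
      state_add_mul_pow hk1 δ q₀ hδ L v n hn, hstuv]
  have hkL0 : 0 < k ^ L := Nat.pow_pos (n := L) (by omega)
  -- the correlation sum for these shifts equals k ^ L
  have hsum : ∑ n ∈ Finset.range (k ^ L),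
      (-1 : ℤ) ^ ((s (n + u * k ^ L)).val + (s (n + v * k ^ L)).val) = (k ^ L : ℤ) := by
    have hterm : ∀ n ∈ Finset.range (k ^ L),
        (-1 : ℤ) ^ ((s (n + u * k ^ L)).val + (s (n + v * k ^ L)).val) = 1 := by
      intro n hn
      rw [hagree n (Finset.mem_range.mp hn), ← two_mul, pow_mul]
      norm_num
    rw [Finset.sum_congr rfl hterm, Finset.sum_const, Finset.card_range]
    simp
  -- membership
  have hmem : (k ^ L : ℤ) ∈ {x : ℤ | ∃ M d₁ d₂ : ℕ, d₁ < d₂ ∧ d₂ + M < N ∧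
      x = |∑ n ∈ Finset.range M, (-1 : ℤ) ^ ((s (n + d₁)).val + (s (n + d₂)).val)|} := by
    refine ⟨k ^ L, u * k ^ L, v * k ^ L, ?_, ?_, ?_⟩
    · exact Nat.mul_lt_mul_of_lt_of_le huv (le_refl _) hkL0
    · calc v * k ^ L + k ^ L = (v + 1) * k ^ L := by ring
        _ ≤ c * k ^ L := Nat.mul_le_mul_right _ (by omega)
        _ < N := hPL
    · rw [hsum]
      simp
  -- bounded above
  have hbdd : BddAbove {x : ℤ | ∃ M d₁ d₂ : ℕ, d₁ < d₂ ∧ d₂ + M < N ∧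
      x = |∑ n ∈ Finset.range M, (-1 : ℤ) ^ ((s (n + d₁)).val + (s (n + d₂)).val)|} := by
    refine ⟨(N : ℤ), fun x hx => ?_⟩
    obtain ⟨M, d₁, d₂, h1, h2, rfl⟩ := hx
    calc |∑ n ∈ Finset.range M, (-1 : ℤ) ^ ((s (n + d₁)).val + (s (n + d₂)).val)|
        ≤ ∑ n ∈ Finset.range M, |(-1 : ℤ) ^ ((s (n + d₁)).val + (s (n + d₂)).val)| :=
          Finset.abs_sum_le_sum_abs _ _
      _ = ∑ n ∈ Finset.range M, 1 := by
          refine Finset.sum_congr rfl fun n _ => ?_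
          rw [abs_pow, abs_neg, abs_one, one_pow]
      _ = (M : ℤ) := by simp
      _ ≤ (N : ℤ) := by exact_mod_cast (by omega : M ≤ N)
  have hC2 : (k ^ L : ℤ) ≤ C2 s N := le_csSup hbdd hmem
  -- final arithmetic
  have hQcast : (N : ℚ) ≤ ((Fintype.card Q : ℚ) + 1) * ((k : ℚ) ^ L * k) := by
    have h := hPsucc
    rw [pow_succ] at h
    exact_mod_cast h
  have hQ : (N : ℚ) / (k * ((Fintype.card Q : ℚ) + 1)) ≤ ((k ^ L : ℤ) : ℚ) := by
    rw [div_le_iff₀ (by positivity)]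
    calc (N : ℚ) ≤ ((Fintype.card Q : ℚ) + 1) * ((k : ℚ) ^ L * k) := hQcast
      _ = ((k ^ L : ℤ) : ℚ) * (k * ((Fintype.card Q : ℚ) + 1)) := by push_cast; ring
  exact hQ.trans (by exact_mod_cast hC2)
end
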